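/- Let σ be the antiholomorphic involution of ℙ¹(ℂ)×ℙ¹(ℂ) given by σ(x,y) = (ȳ, x̄). Let p, q, r, s be four σ-fixed points of ℙ¹(ℂ)×ℙ¹(ℂ) in general position. Then there exist A ∈ GL₂(ℂ) and λ ∈ ℂ∖ℝ such that the automorphism φ_A : (x,y) ↦ (A·x, Ā·y) maps p to ([1:0],[1:0]), q to ([0:1],[0:1]), r to ([1:1],[1:1]) and s to ([λ:1],[λ̄:1]). -/

import Mathlib

noncomputable section

open ComplexConjugate

/-- The projective line `ℙ¹(K)` over a field `K`, i.e. the projectivization of `K²`. -/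
abbrev Pone (K : Type) [Field K] : Type := Projectivization K (Fin 2 → K)

theorem vec_ne_zero {K : Type} [Field K] {a b : K} (h : a ≠ 0 ∨ b ≠ 0) :
    (![a, b] : Fin 2 → K) ≠ 0 := by
  intro hv
  rcases h with h | h
  · exact h (by simpa using congrFun hv 0)
  · exact h (by simpa using congrFun hv 1)

/-- The point `[a : b]` of the projective line `ℙ¹(K)`. -/
def pt {K : Type} [Field K] (a b : K) (h : a ≠ 0 ∨ b ≠ 0) : Pone K :=
  Projectivization.mk K ![a, b] (vec_ne_zero h)

theorem mulVecLin_injective {K : Type} [Field K] (A : GL (Fin 2) K) :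
    Function.Injective ⇑(Matrix.mulVecLin (A : Matrix (Fin 2) (Fin 2) K)) := by
  intro v w hvw
  have h1 : (A : Matrix (Fin 2) (Fin 2) K).mulVec v
      = (A : Matrix (Fin 2) (Fin 2) K).mulVec w := hvw
  have h2 : ((↑(A⁻¹) : Matrix (Fin 2) (Fin 2) K) * (A : Matrix (Fin 2) (Fin 2) K)).mulVec v
      = ((↑(A⁻¹) : Matrix (Fin 2) (Fin 2) K) * (A : Matrix (Fin 2) (Fin 2) K)).mulVec w := by
    rw [← Matrix.mulVec_mulVec, ← Matrix.mulVec_mulVec, h1]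
  rw [Units.inv_mul, Matrix.one_mulVec, Matrix.one_mulVec] at h2
  exact h2

/-- The action of `A ∈ GL₂(K)` on the projective line `ℙ¹(K)`: `A·[v] = [A v]`. -/
def glMap {K : Type} [Field K] (A : GL (Fin 2) K) : Pone K → Pone K :=
  Projectivization.map (Matrix.mulVecLin (A : Matrix (Fin 2) (Fin 2) K)) (mulVecLin_injective A)

/-- Coordinatewise complex conjugation on `ℙ¹(ℂ)`: `[a : b] ↦ [ā : b̄]`. -/
def conjP1 (x : Pone ℂ) : Pone ℂ :=
  Projectivization.mk ℂ (fun i => conj (x.rep i)) (by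
    intro hc
    apply x.rep_nonzero
    funext i
    have h2 : conj (x.rep i) = 0 := congrFun hc i
    simpa using h2)

/-- Entrywise complex conjugation `A ↦ Ā` on `GL₂(ℂ)`. -/
def conjGL (A : GL (Fin 2) ℂ) : GL (Fin 2) ℂ :=
  Units.map (RingHom.toMonoidHom
    ((starRingEnd ℂ).mapMatrix : Matrix (Fin 2) (Fin 2) ℂ →+* Matrix (Fin 2) (Fin 2) ℂ)) A

/-- Four points of `ℙ¹(K) × ℙ¹(K)` are in general position: their images under the first
projection are pairwise distinct, their images under the second projection are pairwise
distinct, and there is no nonzero bilinear form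
`c₀₀u₀v₀ + c₀₁u₀v₁ + c₁₀u₁v₀ + c₁₁u₁v₁` vanishing at all four points (i.e. no curve of
bidegree `(1,1)` through all four points). -/
def GenPos {K : Type} [Field K] (P₁ P₂ P₃ P₄ : Pone K × Pone K) : Prop :=
  [P₁.1, P₂.1, P₃.1, P₄.1].Pairwise (· ≠ ·) ∧
  [P₁.2, P₂.2, P₃.2, P₄.2].Pairwise (· ≠ ·) ∧
  ∀ c₀₀ c₀₁ c₁₀ c₁₁ : K,
    (∀ P ∈ [P₁, P₂, P₃, P₄],
      c₀₀ * P.1.rep 0 * P.2.rep 0 + c₀₁ * P.1.rep 0 * P.2.rep 1 +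
        c₁₀ * P.1.rep 1 * P.2.rep 0 + c₁₁ * P.1.rep 1 * P.2.rep 1 = 0) →
    c₀₀ = 0 ∧ c₀₁ = 0 ∧ c₁₀ = 0 ∧ c₁₁ = 0

/-- The antiholomorphic involution `σ(x, y) = (ȳ, x̄)` of `ℙ¹(ℂ) × ℙ¹(ℂ)` (the real structure
of the quadric `Q_{3,1}`). -/
def sigmaQ (P : Pone ℂ × Pone ℂ) : Pone ℂ × Pone ℂ := (conjP1 P.2, conjP1 P.1)

/-- The automorphism `φ_A : (x, y) ↦ (A·x, Ā·y)` of `ℙ¹(ℂ) × ℙ¹(ℂ)`. -/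
def phiA (A : GL (Fin 2) ℂ) (P : Pone ℂ × Pone ℂ) : Pone ℂ × Pone ℂ :=
  (glMap A P.1, glMap (conjGL A) P.2)

open Projectivization in
theorem glMap_mk (A : GL (Fin 2) ℂ) (v : Fin 2 → ℂ) (hv : v ≠ 0) :
    glMap A (mk ℂ v hv) = mk ℂ ((A : Matrix (Fin 2) (Fin 2) ℂ).mulVec v)
      (by simpa using (mulVecLin_injective A).ne_iff' (map_zero _) |>.2 hv) := by
  exact Projectivization.map_mk _ _ v hv

open Projectivization in
theorem mk_eq_of_smul {v w : Fin 2 → ℂ} (hv : v ≠ 0) (hw : w ≠ 0) (c : ℂ) (hc : c ≠ 0)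
    (h : c • w = v) : mk ℂ v hv = mk ℂ w hw :=
  (mk_eq_mk_iff' ℂ v w hv hw).2 ⟨c, h⟩

open Projectivization in
theorem conjP1_mk (v : Fin 2 → ℂ) (hv : v ≠ 0) :
    conjP1 (mk ℂ v hv) = mk ℂ (fun i => conj (v i))
      (fun hc => hv (by funext i; simpa using congrFun hc i)) := by
  obtain ⟨a, ha⟩ := exists_smul_eq_mk_rep ℂ v hv
  unfold conjP1
  refine mk_eq_of_smul _ _ (conj (a : ℂ)) (by simpa using a.ne_zero) ?_
  funext i
  have := congrFun ha i
  simp only [Pi.smul_apply, Units.smul_def, smul_eq_mul] at this ⊢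
  rw [← this, map_mul]

open Projectivization in
theorem det_ne_of_mk_ne {v w : Fin 2 → ℂ} (hv : v ≠ 0) (hw : w ≠ 0)
    (h : mk ℂ v hv ≠ mk ℂ w hw) : v 0 * w 1 - v 1 * w 0 ≠ 0 := by
  intro hd
  apply h
  have hd' : v 0 * w 1 = v 1 * w 0 := by linear_combination hd
  have hw01 : w 0 ≠ 0 ∨ w 1 ≠ 0 := by
    by_contra hc; push_neg at hc; exact hw (by funext i; fin_cases i <;> simp [hc.1, hc.2])
  rcases hw01 with h0 | h1
  · refine mk_eq_of_smul _ _ (v 0 / w 0) ?_ ?_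
    · intro hc
      rw [div_eq_zero_iff] at hc
      rcases hc with hc | hc
      · -- v 0 = 0, then v1 * w0 = 0 so v1 = 0, contradiction
        have : v 1 = 0 := by
          have := hd'.symm
          rw [hc, zero_mul] at this
          exact (mul_eq_zero.1 this).resolve_right h0
        exact hv (by funext i; fin_cases i <;> simp [hc, this])
      · exact h0 hc
    · funext i
      fin_cases i <;> simp only [Pi.smul_apply, smul_eq_mul]
      · simp only [Fin.zero_eta, Fin.mk_one]; field_simp
      · simp only [Fin.zero_eta, Fin.mk_one]; field_simp; linear_combination hd
  · refine mk_eq_of_smul _ _ (v 1 / w 1) ?_ ?_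
    · intro hc
      rw [div_eq_zero_iff] at hc
      rcases hc with hc | hc
      · have : v 0 = 0 := by
          have := hd'
          rw [hc, zero_mul] at this
          exact (mul_eq_zero.1 this).resolve_right h1
        exact hv (by funext i; fin_cases i <;> simp [hc, this])
      · exact h1 hc
    · funext i
      fin_cases i <;> simp only [Pi.smul_apply, smul_eq_mul]
      · simp only [Fin.zero_eta, Fin.mk_one]; field_simp; linear_combination -hd
      · simp only [Fin.zero_eta, Fin.mk_one]; field_simp

/-- Entry `a` of the normalizing matrix. -/
def aE (vp vq vr : Fin 2 → ℂ) : ℂ := (vp 1 * vr 0 - vp 0 * vr 1) * vq 1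
def bE (vp vq vr : Fin 2 → ℂ) : ℂ := -((vp 1 * vr 0 - vp 0 * vr 1) * vq 0)
def cE (vp vq vr : Fin 2 → ℂ) : ℂ := (vq 1 * vr 0 - vq 0 * vr 1) * vp 1
def dE (vp vq vr : Fin 2 → ℂ) : ℂ := -((vq 1 * vr 0 - vq 0 * vr 1) * vp 0)

def T0E (vp vq vr vs : Fin 2 → ℂ) : ℂ := aE vp vq vr * vs 0 + bE vp vq vr * vs 1
def T1E (vp vq vr vs : Fin 2 → ℂ) : ℂ := cE vp vq vr * vs 0 + dE vp vq vr * vs 1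

def Mmat (vp vq vr : Fin 2 → ℂ) : Matrix (Fin 2) (Fin 2) ℂ :=
  Matrix.of ![![aE vp vq vr, bE vp vq vr], ![cE vp vq vr, dE vp vq vr]]

theorem Mmat_mulVec (vp vq vr v : Fin 2 → ℂ) :
    (Mmat vp vq vr).mulVec v =
      ![aE vp vq vr * v 0 + bE vp vq vr * v 1, cE vp vq vr * v 0 + dE vp vq vr * v 1] := by
  funext i
  fin_cases i <;> simp [Mmat, Matrix.mulVec, dotProduct, Fin.sum_univ_two]

theorem Mmat_det (vp vq vr : Fin 2 → ℂ) :
    (Mmat vp vq vr).det =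
      (vp 1 * vr 0 - vp 0 * vr 1) * (vq 1 * vr 0 - vq 0 * vr 1) *
        (vq 0 * vp 1 - vq 1 * vp 0) := by
  rw [Matrix.det_fin_two]
  simp [Mmat, aE, bE, cE, dE]
  ring

theorem glMap_conjP1 (A : GL (Fin 2) ℂ) (x : Pone ℂ) :
    glMap (conjGL A) (conjP1 x) = conjP1 (glMap A x) := by
  induction x using Projectivization.ind with
  | h v hv =>
    rw [conjP1_mk, glMap_mk, glMap_mk, conjP1_mk]
    refine mk_eq_of_smul _ _ 1 one_ne_zero ?_
    funext i
    have hA : ((conjGL A : GL (Fin 2) ℂ) : Matrix (Fin 2) (Fin 2) ℂ)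
        = ((A : Matrix (Fin 2) (Fin 2) ℂ)).map conj := by
      simp [conjGL, Units.coe_map, RingHom.mapMatrix_apply]
    fin_cases i <;>
      simp [hA, Matrix.mulVec, dotProduct, Fin.sum_univ_two, Matrix.map_apply,
        map_add, map_mul]

theorem pt_eq_mk {K : Type} [Field K] (a b : K) (h : a ≠ 0 ∨ b ≠ 0) :
    pt a b h = Projectivization.mk K ![a, b] (vec_ne_zero h) := rfl

/-- Let `p, q, r, s` be four `σ`-fixed points of `ℙ¹(ℂ) × ℙ¹(ℂ)` in general
position. Then there are `A ∈ GL₂(ℂ)` and `λ ∈ ℂ ∖ ℝ` such that `φ_A : (x,y) ↦ (A·x, Ā·y)`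
maps `p` to `([1:0],[1:0])`, `q` to `([0:1],[0:1])`, `r` to `([1:1],[1:1])` and `s` to
`([λ:1],[λ̄:1])`. -/
theorem statement2 (p q r s : Pone ℂ × Pone ℂ)
    (hp : sigmaQ p = p) (hq : sigmaQ q = q) (hr : sigmaQ r = r) (hs : sigmaQ s = s)
    (hgen : GenPos p q r s) :
    ∃ (A : GL (Fin 2) ℂ) (lam : ℂ), lam.im ≠ 0 ∧
      phiA A p = (pt 1 0 (Or.inl one_ne_zero), pt 1 0 (Or.inl one_ne_zero)) ∧
      phiA A q = (pt 0 1 (Or.inr one_ne_zero), pt 0 1 (Or.inr one_ne_zero)) ∧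
      phiA A r = (pt 1 1 (Or.inl one_ne_zero), pt 1 1 (Or.inl one_ne_zero)) ∧
      phiA A s = (pt lam 1 (Or.inr one_ne_zero), pt (conj lam) 1 (Or.inr one_ne_zero)) := by
  obtain ⟨hd1, hd2, hform⟩ := hgen
  -- second components are conjugates of first components
  have hp2 : p.2 = conjP1 p.1 := (congrArg Prod.snd hp).symm
  have hq2 : q.2 = conjP1 q.1 := (congrArg Prod.snd hq).symm
  have hr2 : r.2 = conjP1 r.1 := (congrArg Prod.snd hr).symm
  have hs2 : s.2 = conjP1 s.1 := (congrArg Prod.snd hs).symm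
  -- pairwise distinctness of first components
  simp only [List.pairwise_cons, List.mem_cons, List.not_mem_nil, List.mem_singleton,
    or_false, and_true, forall_eq_or_imp, forall_eq] at hd1
  have hpq : p.1 ≠ q.1 := by tauto
  have hpr : p.1 ≠ r.1 := by tauto
  have hps : p.1 ≠ s.1 := by tauto
  have hqr : q.1 ≠ r.1 := by tauto
  -- determinant facts
  have dpq : p.1.rep 0 * q.1.rep 1 - p.1.rep 1 * q.1.rep 0 ≠ 0 :=
    det_ne_of_mk_ne p.1.rep_nonzero q.1.rep_nonzero
      (by rw [Projectivization.mk_rep, Projectivization.mk_rep]; exact hpq)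
  have dpr : p.1.rep 0 * r.1.rep 1 - p.1.rep 1 * r.1.rep 0 ≠ 0 :=
    det_ne_of_mk_ne p.1.rep_nonzero r.1.rep_nonzero
      (by rw [Projectivization.mk_rep, Projectivization.mk_rep]; exact hpr)
  have dps : p.1.rep 0 * s.1.rep 1 - p.1.rep 1 * s.1.rep 0 ≠ 0 :=
    det_ne_of_mk_ne p.1.rep_nonzero s.1.rep_nonzero
      (by rw [Projectivization.mk_rep, Projectivization.mk_rep]; exact hps)
  have dqr : q.1.rep 0 * r.1.rep 1 - q.1.rep 1 * r.1.rep 0 ≠ 0 :=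
    det_ne_of_mk_ne q.1.rep_nonzero r.1.rep_nonzero
      (by rw [Projectivization.mk_rep, Projectivization.mk_rep]; exact hqr)
  have hnu : p.1.rep 1 * r.1.rep 0 - p.1.rep 0 * r.1.rep 1 ≠ 0 := by
    intro h; exact dpr (by linear_combination -h)
  have hmu : q.1.rep 1 * r.1.rep 0 - q.1.rep 0 * r.1.rep 1 ≠ 0 := by
    intro h; exact dqr (by linear_combination -h)
  have hd0 : q.1.rep 0 * p.1.rep 1 - q.1.rep 1 * p.1.rep 0 ≠ 0 := by
    intro h; exact dpq (by linear_combination -h)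
  have hps' : p.1.rep 1 * s.1.rep 0 - p.1.rep 0 * s.1.rep 1 ≠ 0 := by
    intro h; exact dps (by linear_combination -h)
  have hdet : (Mmat p.1.rep q.1.rep r.1.rep).det ≠ 0 := by
    rw [Mmat_det]; exact mul_ne_zero (mul_ne_zero hnu hmu) hd0
  set A : GL (Fin 2) ℂ := Matrix.GeneralLinearGroup.mkOfDetNeZero _ hdet with hAdef
  have hA : (A : Matrix (Fin 2) (Fin 2) ℂ) = Mmat p.1.rep q.1.rep r.1.rep := rfl
  -- nonzero scaling factors for the four images
  have hxp : aE p.1.rep q.1.rep r.1.rep * p.1.rep 0 + bE p.1.rep q.1.rep r.1.rep * p.1.rep 1 ≠ 0 := by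
    have e : aE p.1.rep q.1.rep r.1.rep * p.1.rep 0 + bE p.1.rep q.1.rep r.1.rep * p.1.rep 1
        = -((p.1.rep 1 * r.1.rep 0 - p.1.rep 0 * r.1.rep 1) *
            (q.1.rep 0 * p.1.rep 1 - q.1.rep 1 * p.1.rep 0)) := by
      simp only [aE, bE]; ring
    rw [e]; exact neg_ne_zero.2 (mul_ne_zero hnu hd0)
  have hxq : cE p.1.rep q.1.rep r.1.rep * q.1.rep 0 + dE p.1.rep q.1.rep r.1.rep * q.1.rep 1 ≠ 0 := by
    have e : cE p.1.rep q.1.rep r.1.rep * q.1.rep 0 + dE p.1.rep q.1.rep r.1.rep * q.1.rep 1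
        = (q.1.rep 1 * r.1.rep 0 - q.1.rep 0 * r.1.rep 1) *
            (q.1.rep 0 * p.1.rep 1 - q.1.rep 1 * p.1.rep 0) := by
      simp only [cE, dE]; ring
    rw [e]; exact mul_ne_zero hmu hd0
  have hxr : aE p.1.rep q.1.rep r.1.rep * r.1.rep 0 + bE p.1.rep q.1.rep r.1.rep * r.1.rep 1 ≠ 0 := by
    have e : aE p.1.rep q.1.rep r.1.rep * r.1.rep 0 + bE p.1.rep q.1.rep r.1.rep * r.1.rep 1
        = (p.1.rep 1 * r.1.rep 0 - p.1.rep 0 * r.1.rep 1) *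
            (q.1.rep 1 * r.1.rep 0 - q.1.rep 0 * r.1.rep 1) := by
      simp only [aE, bE]; ring
    rw [e]; exact mul_ne_zero hnu hmu
  have hT1 : T1E p.1.rep q.1.rep r.1.rep s.1.rep ≠ 0 := by
    have e : T1E p.1.rep q.1.rep r.1.rep s.1.rep
        = (q.1.rep 1 * r.1.rep 0 - q.1.rep 0 * r.1.rep 1) *
            (p.1.rep 1 * s.1.rep 0 - p.1.rep 0 * s.1.rep 1) := by
      simp only [T1E, cE, dE]; ring
    rw [e]; exact mul_ne_zero hmu hps'
  set lam : ℂ := T0E p.1.rep q.1.rep r.1.rep s.1.rep / T1E p.1.rep q.1.rep r.1.rep s.1.rep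
    with hlam
  -- images of first components
  have imgP : glMap A p.1 = pt 1 0 (Or.inl one_ne_zero) := by
    refine ((congrArg (glMap A) (Projectivization.mk_rep p.1).symm).trans
      (glMap_mk A p.1.rep p.1.rep_nonzero)).trans ?_
    rw [pt_eq_mk]
    refine mk_eq_of_smul _ _ _ hxp ?_
    rw [hA, Mmat_mulVec]
    funext i; fin_cases i
    · simp
    · simp [cE, dE]; ring
  have imgQ : glMap A q.1 = pt 0 1 (Or.inr one_ne_zero) := by
    refine ((congrArg (glMap A) (Projectivization.mk_rep q.1).symm).trans
      (glMap_mk A q.1.rep q.1.rep_nonzero)).trans ?_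
    rw [pt_eq_mk]
    refine mk_eq_of_smul _ _ _ hxq ?_
    rw [hA, Mmat_mulVec]
    funext i; fin_cases i
    · simp [aE, bE]; ring
    · simp
  have imgR : glMap A r.1 = pt 1 1 (Or.inl one_ne_zero) := by
    refine ((congrArg (glMap A) (Projectivization.mk_rep r.1).symm).trans
      (glMap_mk A r.1.rep r.1.rep_nonzero)).trans ?_
    rw [pt_eq_mk]
    refine mk_eq_of_smul _ _ _ hxr ?_
    rw [hA, Mmat_mulVec]
    funext i; fin_cases i
    · simp
    · simp [aE, bE, cE, dE]; ring
  have imgS : glMap A s.1 = pt lam 1 (Or.inr one_ne_zero) := by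
    refine ((congrArg (glMap A) (Projectivization.mk_rep s.1).symm).trans
      (glMap_mk A s.1.rep s.1.rep_nonzero)).trans ?_
    rw [pt_eq_mk]
    refine mk_eq_of_smul _ _ (T1E p.1.rep q.1.rep r.1.rep s.1.rep) hT1 ?_
    rw [hA, Mmat_mulVec]
    funext i; fin_cases i
    · show T1E p.1.rep q.1.rep r.1.rep s.1.rep * lam = _
      rw [hlam, mul_div_cancel₀ _ hT1]
      simp [T0E]
    · show T1E p.1.rep q.1.rep r.1.rep s.1.rep * 1 = _
      simp [T1E]
  -- conjugation of pt
  have conj_pt : ∀ (a b : ℂ) (h : a ≠ 0 ∨ b ≠ 0) (h' : conj a ≠ 0 ∨ conj b ≠ 0),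
      conjP1 (pt a b h) = pt (conj a) (conj b) h' := by
    intro a b h h'
    rw [pt_eq_mk, pt_eq_mk, conjP1_mk]
    refine mk_eq_of_smul _ _ 1 one_ne_zero ?_
    funext i; fin_cases i <;> simp
  have c10 : conjP1 (pt 1 0 (Or.inl one_ne_zero)) = pt 1 0 (Or.inl one_ne_zero) := by
    rw [conj_pt 1 0 _ (Or.inl (by simp))]
    simp [pt_eq_mk]
  have c01 : conjP1 (pt 0 1 (Or.inr one_ne_zero)) = pt 0 1 (Or.inr one_ne_zero) := by
    rw [conj_pt 0 1 _ (Or.inr (by simp))]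
    simp [pt_eq_mk]
  have c11 : conjP1 (pt 1 1 (Or.inl one_ne_zero)) = pt 1 1 (Or.inl one_ne_zero) := by
    rw [conj_pt 1 1 _ (Or.inl (by simp))]
    simp [pt_eq_mk]
  have cll : conjP1 (pt lam 1 (Or.inr one_ne_zero)) = pt (conj lam) 1 (Or.inr one_ne_zero) := by
    rw [conj_pt lam 1 _ (Or.inr (by simp))]
    simp [pt_eq_mk]
  -- the imaginary part of lam is nonzero
  have him : lam.im ≠ 0 := by
    intro him0
    have hclam : conj lam = lam := Complex.conj_eq_iff_im.2 him0
    have hcT1 : conj (T1E p.1.rep q.1.rep r.1.rep s.1.rep) ≠ 0 := by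
      intro h
      exact hT1 ((starRingEnd ℂ).injective (by rw [h, map_zero]))
    have hkey : T0E p.1.rep q.1.rep r.1.rep s.1.rep * conj (T1E p.1.rep q.1.rep r.1.rep s.1.rep)
        = conj (T0E p.1.rep q.1.rep r.1.rep s.1.rep) * T1E p.1.rep q.1.rep r.1.rep s.1.rep := by
      rw [hlam, map_div₀] at hclam
      field_simp at hclam
      linear_combination -hclam
    simp only [T0E, T1E, aE, bE, cE, dE, map_add, map_mul, map_sub, map_neg] at hkey
    -- the representative of the second component of each point
    obtain ⟨tp, htp⟩ := (Projectivization.mk_eq_mk_iff ℂ _ _ p.2.rep_nonzero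
      (fun hc => p.1.rep_nonzero (by funext i; simpa using congrFun hc i))).1
      ((Projectivization.mk_rep p.2).trans (hp2.trans
        ((congrArg conjP1 (Projectivization.mk_rep p.1).symm).trans
          (conjP1_mk p.1.rep p.1.rep_nonzero))))
    obtain ⟨tq, htq⟩ := (Projectivization.mk_eq_mk_iff ℂ _ _ q.2.rep_nonzero
      (fun hc => q.1.rep_nonzero (by funext i; simpa using congrFun hc i))).1
      ((Projectivization.mk_rep q.2).trans (hq2.trans
        ((congrArg conjP1 (Projectivization.mk_rep q.1).symm).trans
          (conjP1_mk q.1.rep q.1.rep_nonzero))))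
    obtain ⟨tr, htr⟩ := (Projectivization.mk_eq_mk_iff ℂ _ _ r.2.rep_nonzero
      (fun hc => r.1.rep_nonzero (by funext i; simpa using congrFun hc i))).1
      ((Projectivization.mk_rep r.2).trans (hr2.trans
        ((congrArg conjP1 (Projectivization.mk_rep r.1).symm).trans
          (conjP1_mk r.1.rep r.1.rep_nonzero))))
    obtain ⟨ts, hts⟩ := (Projectivization.mk_eq_mk_iff ℂ _ _ s.2.rep_nonzero
      (fun hc => s.1.rep_nonzero (by funext i; simpa using congrFun hc i))).1
      ((Projectivization.mk_rep s.2).trans (hs2.trans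
        ((congrArg conjP1 (Projectivization.mk_rep s.1).symm).trans
          (conjP1_mk s.1.rep s.1.rep_nonzero))))
    obtain ⟨h00, h01, h10, h11⟩ := hform
      (-(cE p.1.rep q.1.rep r.1.rep) * conj (aE p.1.rep q.1.rep r.1.rep)
        + aE p.1.rep q.1.rep r.1.rep * conj (cE p.1.rep q.1.rep r.1.rep))
      (-(cE p.1.rep q.1.rep r.1.rep) * conj (bE p.1.rep q.1.rep r.1.rep)
        + aE p.1.rep q.1.rep r.1.rep * conj (dE p.1.rep q.1.rep r.1.rep))
      (-(dE p.1.rep q.1.rep r.1.rep) * conj (aE p.1.rep q.1.rep r.1.rep)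
        + bE p.1.rep q.1.rep r.1.rep * conj (cE p.1.rep q.1.rep r.1.rep))
      (-(dE p.1.rep q.1.rep r.1.rep) * conj (bE p.1.rep q.1.rep r.1.rep)
        + bE p.1.rep q.1.rep r.1.rep * conj (dE p.1.rep q.1.rep r.1.rep))
      (by
        intro P hP
        simp only [List.mem_cons, List.not_mem_nil, or_false] at hP
        rcases hP with rfl | rfl | rfl | rfl
        · rw [← htp]
          simp only [Units.smul_def, Pi.smul_apply, smul_eq_mul, aE, bE, cE, dE,
            map_mul, map_sub, map_neg]
          ring
        · rw [← htq]
          simp only [Units.smul_def, Pi.smul_apply, smul_eq_mul, aE, bE, cE, dE,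
            map_mul, map_sub, map_neg]
          ring
        · rw [← htr]
          simp only [Units.smul_def, Pi.smul_apply, smul_eq_mul, aE, bE, cE, dE,
            map_mul, map_sub, map_neg]
          ring
        · rw [← hts]
          simp only [Units.smul_def, Pi.smul_apply, smul_eq_mul, aE, bE, cE, dE,
            map_mul, map_sub, map_neg]
          linear_combination (ts : ℂ) * hkey)
    have h1 : aE p.1.rep q.1.rep r.1.rep * dE p.1.rep q.1.rep r.1.rep
          - bE p.1.rep q.1.rep r.1.rep * cE p.1.rep q.1.rep r.1.rep ≠ 0 := by
      have e : aE p.1.rep q.1.rep r.1.rep * dE p.1.rep q.1.rep r.1.rep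
          - bE p.1.rep q.1.rep r.1.rep * cE p.1.rep q.1.rep r.1.rep
          = (Mmat p.1.rep q.1.rep r.1.rep).det := by
        rw [Matrix.det_fin_two]; simp [Mmat]
      rw [e]; exact hdet
    have h2 : conj (aE p.1.rep q.1.rep r.1.rep) * conj (dE p.1.rep q.1.rep r.1.rep)
        - conj (bE p.1.rep q.1.rep r.1.rep) * conj (cE p.1.rep q.1.rep r.1.rep) ≠ 0 := by
      have e : conj (aE p.1.rep q.1.rep r.1.rep) * conj (dE p.1.rep q.1.rep r.1.rep)
          - conj (bE p.1.rep q.1.rep r.1.rep) * conj (cE p.1.rep q.1.rep r.1.rep)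
          = conj (aE p.1.rep q.1.rep r.1.rep * dE p.1.rep q.1.rep r.1.rep
              - bE p.1.rep q.1.rep r.1.rep * cE p.1.rep q.1.rep r.1.rep) := by
        simp [map_mul, map_sub]
      rw [e]
      intro h
      exact h1 ((starRingEnd ℂ).injective (by rw [h, map_zero]))
    refine absurd ?_ (mul_ne_zero h1 h2)
    linear_combination
      (-(dE p.1.rep q.1.rep r.1.rep) * conj (bE p.1.rep q.1.rep r.1.rep)
        + bE p.1.rep q.1.rep r.1.rep * conj (dE p.1.rep q.1.rep r.1.rep)) * h00
      - (-(dE p.1.rep q.1.rep r.1.rep) * conj (aE p.1.rep q.1.rep r.1.rep)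
        + bE p.1.rep q.1.rep r.1.rep * conj (cE p.1.rep q.1.rep r.1.rep)) * h01
  refine ⟨A, lam, him, ?_, ?_, ?_, ?_⟩
  · exact Prod.ext imgP (by show glMap (conjGL A) p.2 = _; rw [hp2, glMap_conjP1, imgP, c10])
  · exact Prod.ext imgQ (by show glMap (conjGL A) q.2 = _; rw [hq2, glMap_conjP1, imgQ, c01])
  · exact Prod.ext imgR (by show glMap (conjGL A) r.2 = _; rw [hr2, glMap_conjP1, imgR, c11])
  · exact Prod.ext imgS (by show glMap (conjGL A) s.2 = _; rw [hs2, glMap_conjP1, imgS, cll])
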